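/- A finitely complete category C has Ari-closed strong relations if and only if it has both Mal-closed strong relations and Maj-closed strong relations; that is, C is weakly arithmetical if and only if it is weakly Mal'tsev and weakly majority. -/

import Mathlib

open CategoryTheory CategoryTheory.Limits

universe w v u

/-- A (non-pointed) extended matrix `M ∈ matr(n,m,k)`: `n > 0` rows, `m` left
columns and one right column, with entries in `{x₁, …, x_k}` (modelled as
`Fin k`). `matr` is the union over all `n,m,k`, i.e. the type `Matr`. -/
structure Matr where
  n : ℕ
  m : ℕ
  k : ℕ
  npos : 0 < n
  left : Fin n → Fin m → Fin k
  right : Fin n → Fin k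

namespace Matr

variable {C : Type u} [Category.{v} C]

/-- A relation `r : R ⟶ P`, where `pr` exhibits `P` as the `n`-fold product
`Xⁿ`, is `M`-closed: for every object `Z` and every interpretation
`f : {x₁,…,x_k} → C(Z,X)` of the entries of `M`, if for every left column `j`
the induced morphism `Z ⟶ Xⁿ` factors through `r`, then so does the morphism
induced by the right column. -/
def IsClosed (M : Matr) {X P R : C} (pr : Fin M.n → (P ⟶ X))
    (hP : IsLimit (Fan.mk P pr)) (r : R ⟶ P) : Prop :=
  ∀ (Z : C) (f : Fin M.k → (Z ⟶ X)),
    (∀ j : Fin M.m, ∃ g : Z ⟶ R,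
        g ≫ r = hP.lift (Fan.mk Z (fun i => f (M.left i j)))) →
    ∃ g : Z ⟶ R, g ≫ r = hP.lift (Fan.mk Z (fun i => f (M.right i)))

/-- A relation `r : R ⟶ P`, where `pr` exhibits `P` as the product
`X₁ × ⋯ × X_n` of a family `X : Fin n → C`, is strictly `M`-closed: for every
object `Z` and every row-wise interpretation `fᵢ : {x₁,…,x_k} → C(Z,Xᵢ)`, if
every left column's induced morphism `Z ⟶ X₁ × ⋯ × X_n` factors through `r`,
then so does the right column's induced morphism. -/
def IsStrictClosed (M : Matr) {X : Fin M.n → C} {P R : C}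
    (pr : ∀ i, P ⟶ X i) (hP : IsLimit (Fan.mk P pr)) (r : R ⟶ P) : Prop :=
  ∀ (Z : C) (f : ∀ i, Fin M.k → (Z ⟶ X i)),
    (∀ j : Fin M.m, ∃ g : Z ⟶ R,
        g ≫ r = hP.lift (Fan.mk Z (fun i => f i (M.left i j)))) →
    ∃ g : Z ⟶ R, g ≫ r = hP.lift (Fan.mk Z (fun i => f i (M.right i)))

/-- `C` has `M`-closed `W`-relations: every `n`-ary relation `r : R ⟶ Xⁿ`
belonging to the class of monomorphisms `W` is `M`-closed. -/
def HasClosedRels (M : Matr) (C : Type u) [Category.{v} C]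
    (W : MorphismProperty C) : Prop :=
  ∀ (X P R : C) (pr : Fin M.n → (P ⟶ X)) (hP : IsLimit (Fan.mk P pr))
    (r : R ⟶ P), W r → M.IsClosed pr hP r

/-- `C` has `S`-closed `W`-relations. -/
def HasSClosedRels (S : Set Matr) (C : Type u) [Category.{v} C]
    (W : MorphismProperty C) : Prop :=
  ∀ M ∈ S, HasClosedRels M C W

end Matr

/-- The class of strong monomorphisms of `C`, as a `MorphismProperty`. -/
def strongMonos (C : Type u) [Category.{v} C] : MorphismProperty C :=
  fun _ _ f => StrongMono f

/-- The Mal'tsev matrix `Mal ∈ matr(2,3,2)`, with rows `(x₁ x₂ x₂ | x₁)` and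
`(x₂ x₂ x₁ | x₁)`; here `x₁` is `0` and `x₂` is `1` in `Fin 2`. -/
def MalMatr : Matr :=
  ⟨2, 3, 2, by omega, ![![0, 1, 1], ![1, 1, 0]], ![0, 0]⟩

/-- The majority matrix `Maj ∈ matr(3,3,2)`, with rows `(x₁ x₁ x₂ | x₁)`,
`(x₁ x₂ x₁ | x₁)` and `(x₂ x₁ x₁ | x₁)`. -/
def MajMatr : Matr :=
  ⟨3, 3, 2, by omega, ![![0, 0, 1], ![0, 1, 0], ![1, 0, 0]], ![0, 0, 0]⟩

/-- The arithmetical matrix `Ari ∈ matr(3,3,2)`, with rows `(x₁ x₂ x₂ | x₁)`,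
`(x₂ x₂ x₁ | x₁)` and `(x₁ x₂ x₁ | x₁)`. -/
def AriMatr : Matr :=
  ⟨3, 3, 2, by omega, ![![0, 1, 1], ![1, 1, 0], ![0, 1, 0]], ![0, 0, 0]⟩

section AuxiliaryLemmas

variable {C : Type u} [Category.{v} C]

/-- Strong monomorphisms are stable under pullback. -/
theorem strongMono_pullback_snd' {X Y Z : C}
    (f : X ⟶ Z) (g : Y ⟶ Z) [HasPullback f g]
    (hf : StrongMono f) : StrongMono (pullback.snd f g) := by
  have : Mono f := hf.mono
  have : Mono (pullback.snd f g) := inferInstance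
  refine StrongMono.mk' (fun A B z hz a b sq => ?_)
  have sq2 : CommSq (a ≫ pullback.fst f g) z f (b ≫ g) := ⟨by
    rw [Category.assoc, pullback.condition, reassoc_of% sq.w]⟩
  have := hf.rlp z
  refine ⟨⟨⟨pullback.lift sq2.lift b (by simp), ?_, pullback.lift_snd _ _ _⟩⟩⟩
  apply pullback.hom_ext
  · rw [Category.assoc, pullback.lift_fst, sq2.fac_left]
  · rw [Category.assoc, pullback.lift_snd]
    exact sq.w.symm

/-- Lifts against a fan agree when the components agree. -/
theorem lift_congr {n : ℕ} {X P : C} {pr : Fin n → (P ⟶ X)}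
    (hP : IsLimit (Fan.mk P pr)) {Z : C} {c c' : Fin n → (Z ⟶ X)}
    (h : ∀ i, c i = c' i) :
    hP.lift (Fan.mk Z c) = hP.lift (Fan.mk Z c') := by
  have : c = c' := funext h
  rw [this]

/-- Master lemma: if `C` has `M`-closed strong relations, then every strong
relation into a power of `X` is closed under the `M`-rule applied along any
regrouping `σ` of its coordinates into the rows of `M`, with coordinatewise
interpretations of the variables of `M`. -/
theorem Matr.master [HasFiniteLimits C]
    (M : Matr) (hM : M.HasClosedRels C (strongMonos C))
    {n : ℕ} {X P R : C} (pr : Fin n → (P ⟶ X)) (hP : IsLimit (Fan.mk P pr))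
    (r : R ⟶ P) (hr : StrongMono r) (σ : Fin n → Fin M.n)
    (Z : C) (f : Fin n → Fin M.k → (Z ⟶ X))
    (H : ∀ j : Fin M.m, ∃ g : Z ⟶ R,
        g ≫ r = hP.lift (Fan.mk Z (fun i => f i (M.left (σ i) j)))) :
    ∃ g : Z ⟶ R, g ≫ r = hP.lift (Fan.mk Z (fun i => f i (M.right (σ i)))) := by
  have facP : ∀ {W : C} (c : Fin n → (W ⟶ X)) (i : Fin n),
      hP.lift (Fan.mk W c) ≫ pr i = c i := fun c i => hP.fac (Fan.mk _ c) ⟨i⟩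
  have extP : ∀ {W : C} (a b : W ⟶ P), (∀ i, a ≫ pr i = b ≫ pr i) → a = b :=
    fun a b h => hP.hom_ext (fun j => h j.as)
  let π : Fin M.n → ((∏ᶜ (fun _ : Fin M.n => P)) ⟶ P) := Pi.π _
  have hQ : IsLimit (Fan.mk (∏ᶜ (fun _ : Fin M.n => P)) π) := productIsProduct _
  have facQ : ∀ {W : C} (c : Fin M.n → (W ⟶ P)) (a : Fin M.n),
      hQ.lift (Fan.mk W c) ≫ π a = c a := fun c a => hQ.fac (Fan.mk _ c) ⟨a⟩
  let u : (∏ᶜ (fun _ : Fin M.n => P)) ⟶ P :=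
    hP.lift (Fan.mk _ (fun i => π (σ i) ≫ pr i))
  have hu : ∀ i, u ≫ pr i = π (σ i) ≫ pr i := fun i => facP _ i
  have hsm : strongMonos C (pullback.snd r u) := strongMono_pullback_snd' r u hr
  let F : Fin M.k → (Z ⟶ P) := fun v => hP.lift (Fan.mk Z (fun i => f i v))
  have hF : ∀ v i, F v ≫ pr i = f i v := fun v i => facP _ i
  have hyp : ∀ j : Fin M.m, ∃ g : Z ⟶ pullback r u,
      g ≫ pullback.snd r u = hQ.lift (Fan.mk Z (fun a => F (M.left a j))) := by
    intro j
    obtain ⟨g, hg⟩ := H j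
    have w : g ≫ r = hQ.lift (Fan.mk Z (fun a => F (M.left a j))) ≫ u := by
      refine extP _ _ (fun i => ?_)
      calc (g ≫ r) ≫ pr i
          = f i (M.left (σ i) j) := by rw [hg, facP]
        _ = F (M.left (σ i) j) ≫ pr i := (hF _ i).symm
        _ = (hQ.lift (Fan.mk Z (fun a => F (M.left a j))) ≫ π (σ i)) ≫ pr i := by
              rw [facQ]
        _ = hQ.lift (Fan.mk Z (fun a => F (M.left a j))) ≫ π (σ i) ≫ pr i := by
              rw [Category.assoc]
        _ = hQ.lift (Fan.mk Z (fun a => F (M.left a j))) ≫ u ≫ pr i := by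
              rw [hu i]
        _ = (hQ.lift (Fan.mk Z (fun a => F (M.left a j))) ≫ u) ≫ pr i := by
              rw [Category.assoc]
    exact ⟨pullback.lift g _ w, pullback.lift_snd _ _ _⟩
  obtain ⟨g, hg⟩ :=
    hM P (∏ᶜ (fun _ : Fin M.n => P)) (pullback r u) π hQ (pullback.snd r u) hsm Z F hyp
  refine ⟨g ≫ pullback.fst r u, extP _ _ (fun i => ?_)⟩
  have e1 : (g ≫ pullback.fst r u) ≫ r = (g ≫ pullback.snd r u) ≫ u := by
    rw [Category.assoc, Category.assoc, pullback.condition]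
  calc ((g ≫ pullback.fst r u) ≫ r) ≫ pr i
      = ((g ≫ pullback.snd r u) ≫ u) ≫ pr i := by rw [e1]
    _ = (g ≫ pullback.snd r u) ≫ u ≫ pr i := by rw [Category.assoc]
    _ = (g ≫ pullback.snd r u) ≫ π (σ i) ≫ pr i := by rw [hu i]
    _ = (hQ.lift (Fan.mk Z (fun a => F (M.right a))) ≫ π (σ i)) ≫ pr i := by
          rw [hg, Category.assoc]
    _ = F (M.right (σ i)) ≫ pr i := by rw [facQ]
    _ = f i (M.right (σ i)) := hF _ i
    _ = hP.lift (Fan.mk Z (fun i => f i (M.right (σ i)))) ≫ pr i :=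
          (facP (fun i => f i (M.right (σ i))) i).symm

end AuxiliaryLemmas

/-- A finitely complete category `C` has `Ari`-closed strong
relations if and only if it has both `Mal`-closed strong relations and
`Maj`-closed strong relations; i.e. `C` is weakly arithmetical iff it is
weakly Mal'tsev and weakly majority. -/
theorem weakly_arithmetical_iff_weakly_maltsev_and_weakly_majority
    (C : Type u) [Category.{v} C] [HasFiniteLimits C] :
    AriMatr.HasClosedRels C (strongMonos C) ↔
      MalMatr.HasClosedRels C (strongMonos C) ∧
        MajMatr.HasClosedRels C (strongMonos C) := by
  constructor
  · intro hAri
    constructor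
    · -- Ari ⇒ Mal
      intro X P R pr hP r hr Z f H
      have H' : ∀ j : Fin 3, ∃ g : Z ⟶ R,
          g ≫ r = hP.lift (Fan.mk Z (fun i => f (MalMatr.left i j))) := fun j => H j
      obtain ⟨g, hg⟩ := AriMatr.master hAri pr hP r hr
        (![0, 1] : Fin 2 → Fin 3) Z (fun _ v => f v)
        (fun j => (H' j).imp (fun g hg => hg.trans
          (lift_congr hP (fun i => by fin_cases i <;> fin_cases j <;> rfl))))
      exact ⟨g, hg.trans (lift_congr hP (fun i => by fin_cases i <;> rfl))⟩
    · -- Ari ⇒ Maj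
      intro X P R pr hP r hr Z f H
      have H' : ∀ j : Fin 3, ∃ g : Z ⟶ R,
          g ≫ r = hP.lift (Fan.mk Z (fun i => f (MajMatr.left i j))) := fun j => H j
      -- step 1: derive the column (f 1, f 1, f 0)
      have E := AriMatr.master hAri pr hP r hr (fun i => i) Z
        ![![f (1 : Fin 2), f (0 : Fin 2)], ![f (1 : Fin 2), f (0 : Fin 2)], ![f (0 : Fin 2), f (1 : Fin 2)]] ?_
      · -- step 2: derive the column (f 0, f 0, f 0)
        have key := AriMatr.master hAri pr hP r hr (fun i => i) Z
          ![![f (0 : Fin 2), f (1 : Fin 2)], ![f (0 : Fin 2), f (1 : Fin 2)], ![f (0 : Fin 2), f (0 : Fin 2)]] ?_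
        · obtain ⟨g, hg⟩ := key
          exact ⟨g, hg.trans (lift_congr hP (fun i => by fin_cases i <;> rfl))⟩
        · intro j
          fin_cases j
          · exact (H' 1).imp (fun g hg => hg.trans
              (lift_congr hP (fun i => by fin_cases i <;> rfl)))
          · exact E.imp (fun g hg => hg.trans
              (lift_congr hP (fun i => by fin_cases i <;> rfl)))
          · exact (H' 2).imp (fun g hg => hg.trans
              (lift_congr hP (fun i => by fin_cases i <;> rfl)))
      · intro j
        fin_cases j
        · exact (H' 2).imp (fun g hg => hg.trans
            (lift_congr hP (fun i => by fin_cases i <;> rfl)))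
        · exact (H' 0).imp (fun g hg => hg.trans
            (lift_congr hP (fun i => by fin_cases i <;> rfl)))
        · exact (H' 1).imp (fun g hg => hg.trans
            (lift_congr hP (fun i => by fin_cases i <;> rfl)))
  · -- Mal + Maj ⇒ Ari
    rintro ⟨hMal, hMaj⟩
    intro X P R pr hP r hr Z f H
    have H' : ∀ j : Fin 3, ∃ g : Z ⟶ R,
        g ≫ r = hP.lift (Fan.mk Z (fun i => f (AriMatr.left i j))) := fun j => H j
    -- step 1 (majority rule): derive the column (f 1, f 1, f 0)
    have E := MajMatr.master hMaj pr hP r hr (fun i => i) Z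
      ![![f (1 : Fin 2), f (0 : Fin 2)], ![f (1 : Fin 2), f (0 : Fin 2)], ![f (0 : Fin 2), f (1 : Fin 2)]] ?_
    · -- step 2 (Mal'tsev rule along σ = (0, 1, 0)): derive (f 0, f 0, f 0)
      have key := MalMatr.master hMal pr hP r hr (![0, 1, 0] : Fin 3 → Fin 2) Z
        ![![f (0 : Fin 2), f (1 : Fin 2)], ![f (0 : Fin 2), f (1 : Fin 2)], ![f (0 : Fin 2), f (0 : Fin 2)]] ?_
      · obtain ⟨g, hg⟩ := key
        exact ⟨g, hg.trans (lift_congr hP (fun i => by fin_cases i <;> rfl))⟩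
      · intro j
        fin_cases j
        · exact (H' 0).imp (fun g hg => hg.trans
            (lift_congr hP (fun i => by fin_cases i <;> rfl)))
        · exact E.imp (fun g hg => hg.trans
            (lift_congr hP (fun i => by fin_cases i <;> rfl)))
        · exact (H' 2).imp (fun g hg => hg.trans
            (lift_congr hP (fun i => by fin_cases i <;> rfl)))
    · intro j
      fin_cases j
      · exact (H' 1).imp (fun g hg => hg.trans
          (lift_congr hP (fun i => by fin_cases i <;> rfl)))
      · exact (H' 2).imp (fun g hg => hg.trans
          (lift_congr hP (fun i => by fin_cases i <;> rfl)))
      · exact (H' 0).imp (fun g hg => hg.trans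
          (lift_congr hP (fun i => by fin_cases i <;> rfl)))
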